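/- Let φ₁, φ₂, σ be real numbers with sin(φ₁/2) ≠ 0 and sin(φ₂/2) ≠ 0, and let X₀, R, X : ℝ → ℂ be differentiable functions satisfying X₀' = (cot(φ₁/2) + i)(R − X₀), R' = (cot(φ₂/2) − i)(X₀ − R), and X' = X₀'·e^{−iσ}. Suppose X(t) ≠ X₀(t) for all t, and set r = (R − X₀)/(X − X₀). Then r satisfies the ODE r' = −(cot(φ₁/2) + cot(φ₂/2))·r − (cot(φ₁/2) + i)·(e^{−iσ} − 1)·r². -/

import Mathlib

open Real Complex

theorem stmt_11 (φ₁ φ₂ σ : ℝ) (h₁ : Real.sin (φ₁ / 2) ≠ 0) (h₂ : Real.sin (φ₂ / 2) ≠ 0)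
    (X₀ R X : ℝ → ℂ)
    (hX₀ : Differentiable ℝ X₀) (hR : Differentiable ℝ R) (hX : Differentiable ℝ X)
    (hX₀' : ∀ t, deriv X₀ t =
      ((Real.cos (φ₁ / 2) / Real.sin (φ₁ / 2) : ℝ) + Complex.I) * (R t - X₀ t))
    (hR' : ∀ t, deriv R t =
      ((Real.cos (φ₂ / 2) / Real.sin (φ₂ / 2) : ℝ) - Complex.I) * (X₀ t - R t))
    (hX' : ∀ t, deriv X t = deriv X₀ t * Complex.exp (-Complex.I * σ))
    (hne : ∀ t, X t ≠ X₀ t) :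
    ∀ t, deriv (fun s => (R s - X₀ s) / (X s - X₀ s)) t =
      -((Real.cos (φ₁ / 2) / Real.sin (φ₁ / 2) : ℝ) +
          (Real.cos (φ₂ / 2) / Real.sin (φ₂ / 2) : ℝ)) *
          ((R t - X₀ t) / (X t - X₀ t)) -
        ((Real.cos (φ₁ / 2) / Real.sin (φ₁ / 2) : ℝ) + Complex.I) *
          (Complex.exp (-Complex.I * σ) - 1) * ((R t - X₀ t) / (X t - X₀ t)) ^ 2 := by
  intro t
  have hNd : DifferentiableAt ℝ (fun s => R s - X₀ s) t := (hR t).sub (hX₀ t)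
  have hDd : DifferentiableAt ℝ (fun s => X s - X₀ s) t := (hX t).sub (hX₀ t)
  have hD0 : X t - X₀ t ≠ 0 := sub_ne_zero.mpr (hne t)
  rw [deriv_fun_div hNd hDd hD0, deriv_fun_sub (hR t) (hX₀ t), deriv_fun_sub (hX t) (hX₀ t),
    hR' t, hX' t, hX₀' t]
  set c₁ : ℂ := ((Real.cos (φ₁ / 2) / Real.sin (φ₁ / 2) : ℝ) : ℂ)
  set c₂ : ℂ := ((Real.cos (φ₂ / 2) / Real.sin (φ₂ / 2) : ℝ) : ℂ)
  field_simp
  ring
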